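/- arXiv:2601.09082 — 4 statements merged into one kernel-verified Lean document; each statement's English description precedes it below -/
import Mathlib

section
/- Let (X_i)_{i≥1} be independent and identically distributed nonnegative integrable real-valued random variables on a probability space, and let m ∈ ℝ satisfy E[X_1] > m. Then P(∀ n ≥ 1 : ∑_{i=1}^n X_i > n·m) > 0; in particular, with positive probability the running average (1/n)∑_{i=1}^n X_i exceeds m for every n ≥ 1. -/
open MeasureTheory ProbabilityTheory Filter Topology

private lemma exists_lastMin (g : ℕ → ℝ) (hg : Tendsto g atTop atTop) :
    ∃ k, ∀ n, k < n → g k < g n := by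
  classical
  obtain ⟨N, hN⟩ := eventually_atTop.mp (hg.eventually_gt_atTop (g 0))
  set F := Finset.range (N + 1) with hF
  have hFne : F.Nonempty := ⟨0, by simp [hF]⟩
  obtain ⟨k0, hk0F, hk0min⟩ := F.exists_min_image g hFne
  set G := F.filter (fun n => g n ≤ g k0) with hG
  have hGne : G.Nonempty := ⟨k0, by simp [hG, hk0F]⟩
  refine ⟨G.max' hGne, fun n hn => ?_⟩
  have hkG : G.max' hGne ∈ G := G.max'_mem hGne
  have hk1 : g (G.max' hGne) ≤ g k0 := (Finset.mem_filter.mp hkG).2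
  have hk2 : g k0 ≤ g (G.max' hGne) := hk0min _ (Finset.mem_filter.mp hkG).1
  have hgk : g (G.max' hGne) = g k0 := le_antisymm hk1 hk2
  by_cases hnN : n ≤ N
  · have hnF : n ∈ F := Finset.mem_range.mpr (by omega)
    have hng : ¬ g n ≤ g k0 := by
      intro hle
      have hmem : n ∈ G := Finset.mem_filter.mpr ⟨hnF, hle⟩
      have := Finset.le_max' G n hmem
      omega
    rw [hgk]
    exact lt_of_not_ge hng
  · have h1 : g 0 < g n := hN n (by omega)
    have h0F : g k0 ≤ g 0 := hk0min 0 (by simp [hF])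
    rw [hgk]; linarith

private lemma sum_Icc_one_eq (f : ℕ → ℝ) : ∀ n : ℕ,
    ∑ i ∈ Finset.Icc 1 n, f i = ∑ i ∈ Finset.range n, f (i + 1) := by
  intro n
  induction n with
  | zero => simp
  | succ n ih =>
    rw [Finset.sum_Icc_succ_top (by omega), ih, Finset.sum_range_succ]

private lemma map_shift_eq_pi {Ω : Type*} [MeasureSpace Ω]
    [IsProbabilityMeasure (ℙ : Measure Ω)]
    (Y : ℕ → Ω → ℝ) (hYmeas : ∀ i, Measurable (Y i))
    (hindep : iIndepFun Y ℙ) (k N : ℕ) :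
    Measure.map (fun ω (j : Fin N) => Y (k + j) ω) ℙ
      = Measure.pi (fun j : Fin N => Measure.map (Y (k + j)) ℙ) := by
  classical
  haveI : ∀ j : Fin N, IsProbabilityMeasure (Measure.map (Y (k + j)) ℙ) :=
    fun j => Measure.isProbabilityMeasure_map (hYmeas _).aemeasurable
  have hV : Measurable (fun ω (j : Fin N) => Y (k + j) ω) :=
    measurable_pi_lambda _ (fun j => hYmeas _)
  refine (Measure.pi_eq fun s hs => ?_).symm
  rw [Measure.map_apply hV (MeasurableSet.univ_pi hs)]
  have hpre : (fun ω (j : Fin N) => Y (k + j) ω) ⁻¹' Set.pi Set.univ s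
      = ⋂ j : Fin N, Y (k + j) ⁻¹' s j := by
    ext ω; simp [Set.mem_pi]
  rw [hpre]
  set sets : ℕ → Set ℝ := fun i =>
    if h : k ≤ i ∧ i - k < N then s ⟨i - k, h.2⟩ else Set.univ with hsets_def
  have hsets : ∀ j : Fin N, sets (k + j) = s j := by
    intro j
    have h : k ≤ k + (j : ℕ) ∧ (k + (j : ℕ)) - k < N := ⟨by omega, by simpa using j.isLt⟩
    rw [hsets_def]
    simp only [dif_pos h]
    have hj : (⟨k + (j : ℕ) - k, h.2⟩ : Fin N) = j := by
      apply Fin.ext; simp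
    rw [hj]
  set S : Finset ℕ := Finset.image (fun j : Fin N => k + (j : ℕ)) Finset.univ with hS
  have hinj : ∀ j ∈ (Finset.univ : Finset (Fin N)), ∀ j' ∈ (Finset.univ : Finset (Fin N)),
      k + (j : ℕ) = k + (j' : ℕ) → j = j' := by
    intro j _ j' _ h
    apply Fin.ext
    omega
  have hmeas_sets : ∀ i, i ∈ S → MeasurableSet (sets i) := by
    intro i _
    rw [hsets_def]
    by_cases h : k ≤ i ∧ i - k < N
    · simp only [dif_pos h]; exact hs _
    · simp only [dif_neg h]; exact MeasurableSet.univ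
  have hinter : (⋂ i ∈ S, Y i ⁻¹' sets i) = ⋂ j : Fin N, Y (k + j) ⁻¹' s j := by
    ext ω
    simp only [Set.mem_iInter, hS, Finset.mem_image, Finset.mem_univ, true_and]
    constructor
    · intro h j
      have := h _ ⟨j, rfl⟩
      rwa [hsets j] at this
    · rintro h i ⟨j, rfl⟩
      rw [hsets j]
      exact h j
  have hprod := hindep.measure_inter_preimage_eq_mul S hmeas_sets
  rw [hinter] at hprod
  rw [hprod, hS, Finset.prod_image hinj]
  refine Finset.prod_congr rfl fun j _ => ?_
  rw [hsets j, Measure.map_apply (hYmeas _) (hs j)]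

private theorem aux_main {Ω : Type*} [MeasureSpace Ω]
    [IsProbabilityMeasure (ℙ : Measure Ω)]
    (Y : ℕ → Ω → ℝ) (m : ℝ)
    (hYmeas : ∀ i, Measurable (Y i))
    (hindep : iIndepFun Y ℙ)
    (hident : ∀ i, IdentDistrib (Y i) (Y 0) ℙ ℙ)
    (hint : Integrable (Y 0) ℙ)
    (hmean : m < ∫ ω, Y 0 ω ∂ℙ) :
    0 < ℙ {ω | ∀ n : ℕ, 1 ≤ n → (n : ℝ) * m < ∑ i ∈ Finset.range n, Y i ω} := by
  classical
  set A : ℕ → Set Ω := fun k =>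
    {ω | ∀ n : ℕ, 1 ≤ n → (n : ℝ) * m < ∑ i ∈ Finset.range n, Y (k + i) ω} with hA
  -- Strong law of large numbers
  have hpair : Pairwise (Function.onFun (IndepFun · · ℙ) Y) := fun i j hij => hindep.indepFun hij
  have hslln := strong_law_ae_real Y hint hpair hident
  -- a.e. ω belongs to some A k
  have hae : ∀ᵐ ω ∂ℙ, ∃ k, ω ∈ A k := by
    filter_upwards [hslln] with ω hω
    set g : ℕ → ℝ := fun n => (∑ i ∈ Finset.range n, Y i ω) - n * m with hg
    have hgtop : Tendsto g atTop atTop := by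
      set c : ℝ := (ℙ[Y 0] - m) / 2 with hc_def
      have hc : 0 < c := by
        have : m < ℙ[Y 0] := hmean
        rw [hc_def]; linarith
      have h1 : Tendsto (fun n : ℕ => (n : ℝ) * c) atTop atTop :=
        Tendsto.atTop_mul_const hc tendsto_natCast_atTop_atTop
      refine tendsto_atTop_mono' atTop ?_ h1
      have h2 : ∀ᶠ n in atTop,
          ℙ[Y 0] - c ≤ (∑ i ∈ Finset.range n, Y i ω) / n :=
        hω.eventually (eventually_ge_nhds (by linarith))
      filter_upwards [h2, eventually_ge_atTop 1] with n h2n h1n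
      have hn0 : (0 : ℝ) < n := by exact_mod_cast h1n
      have h3 : (ℙ[Y 0] - c) * n ≤ ∑ i ∈ Finset.range n, Y i ω :=
        (le_div_iff₀ hn0).mp h2n
      have hcc : ℙ[Y 0] - c = m + c := by rw [hc_def]; ring
      rw [hcc] at h3
      simp only [hg]
      nlinarith
    obtain ⟨k, hk⟩ := exists_lastMin g hgtop
    refine ⟨k, fun n hn => ?_⟩
    have h3 := hk (k + n) (by omega)
    have h4 : ∑ i ∈ Finset.range (k + n), Y i ω
        = ∑ i ∈ Finset.range k, Y i ω + ∑ i ∈ Finset.range n, Y (k + i) ω :=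
      Finset.sum_range_add (fun i => Y i ω) k n
    simp only [hg] at h3
    rw [h4] at h3
    push_cast at h3 ⊢
    linarith
  -- hence some A k has positive probability
  have hUk : ∃ k, ℙ (A k) ≠ 0 := by
    by_contra h
    push_neg at h
    have h0 : ℙ (⋃ k, A k) = 0 := measure_iUnion_null h
    have h1 : ℙ {ω | ¬ ∃ k, ω ∈ A k} = 0 := ae_iff.mp hae
    have h2 : ℙ (Set.univ : Set Ω) ≤ ℙ (⋃ k, A k) + ℙ {ω | ¬ ∃ k, ω ∈ A k} := by
      refine le_trans (measure_mono ?_) (measure_union_le _ _)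
      intro ω _
      by_cases hx : ∃ k, ω ∈ A k
      · exact Or.inl (Set.mem_iUnion.mpr hx)
      · exact Or.inr hx
    rw [h0, h1, measure_univ] at h2
    simp at h2
  obtain ⟨k, hk⟩ := hUk
  -- the events A k all have the same probability
  set B : ℕ → ℕ → Set Ω := fun k N =>
    {ω | ∀ n : ℕ, 1 ≤ n → n ≤ N → (n : ℝ) * m < ∑ i ∈ Finset.range n, Y (k + i) ω}
    with hB
  have hAB : ∀ k, A k = ⋂ N, B k N := by
    intro k
    ext ω
    simp only [hA, hB, Set.mem_setOf_eq, Set.mem_iInter]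
    constructor
    · intro h N n h1 _; exact h n h1
    · intro h n h1; exact h n n h1 le_rfl
  have hanti : ∀ k, Antitone (B k) := by
    intro k N M hNM ω hω n h1 h2
    exact hω n h1 (h2.trans hNM)
  set V : (k : ℕ) → (N : ℕ) → Ω → (Fin N → ℝ) :=
    fun k N ω j => Y (k + j) ω with hVdef
  have hV : ∀ k N, Measurable (V k N) :=
    fun k N => measurable_pi_lambda _ (fun j => hYmeas _)
  set C : (N : ℕ) → Set (Fin N → ℝ) := fun N =>
    {x | ∀ n : ℕ, 1 ≤ n → n ≤ N →
      (n : ℝ) * m < ∑ i ∈ Finset.range n, (if h : i < N then x ⟨i, h⟩ else 0)}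
    with hCdef
  have hC : ∀ N, MeasurableSet (C N) := by
    intro N
    have hCi : C N = ⋂ (n : ℕ), ⋂ (_ : 1 ≤ n), ⋂ (_ : n ≤ N),
        {x : Fin N → ℝ | (n : ℝ) * m
          < ∑ i ∈ Finset.range n, (if h : i < N then x ⟨i, h⟩ else 0)} := by
      ext x
      simp only [hCdef, Set.mem_setOf_eq, Set.mem_iInter]
    rw [hCi]
    refine MeasurableSet.iInter fun n => MeasurableSet.iInter fun _ =>
      MeasurableSet.iInter fun _ => ?_
    apply measurableSet_lt measurable_const
    apply Finset.measurable_sum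
    intro i _
    by_cases h : i < N
    · simp only [dif_pos h]
      exact measurable_pi_apply _
    · simp only [dif_neg h]
      exact measurable_const
  have hBC : ∀ k N, B k N = V k N ⁻¹' C N := by
    intro k N
    ext ω
    have hsum' : ∀ n : ℕ, n ≤ N →
        (∑ i ∈ Finset.range n, (if h : i < N then V k N ω ⟨i, h⟩ else 0))
          = ∑ i ∈ Finset.range n, Y (k + i) ω := by
      intro n hn
      refine Finset.sum_congr rfl fun i hi => ?_
      rw [dif_pos (lt_of_lt_of_le (Finset.mem_range.mp hi) hn)]
    simp only [hB, Set.mem_setOf_eq, Set.mem_preimage, hCdef]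
    constructor
    · intro h n h1 h2; rw [hsum' n h2]; exact h n h1 h2
    · intro h n h1 h2; rw [← hsum' n h2]; exact h n h1 h2
  have hBmeas : ∀ k N, MeasurableSet (B k N) := by
    intro k N
    rw [hBC]
    exact (hV k N) (hC N)
  have hlaw : ∀ k N, Measure.map (V k N) ℙ = Measure.pi (fun _ : Fin N => Measure.map (Y 0) ℙ) := by
    intro k N
    rw [hVdef, map_shift_eq_pi Y hYmeas hindep k N]
    congr 1
    funext j
    exact (hident (k + j)).map_eq
  have hBprob : ∀ N, ℙ (B k N) = ℙ (B 0 N) := by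
    intro N
    rw [hBC, hBC, ← Measure.map_apply (hV k N) (hC N),
      ← Measure.map_apply (hV 0 N) (hC N), hlaw k N, hlaw 0 N]
  have hT : ∀ j, Tendsto (ℙ ∘ B j) atTop (𝓝 (ℙ (A j))) := by
    intro j
    rw [hAB j]
    exact tendsto_measure_iInter_atTop
      (fun N => (hBmeas j N).nullMeasurableSet) (hanti j) ⟨0, measure_ne_top _ _⟩
  have hfun : (ℙ ∘ B k) = (ℙ ∘ B 0) := funext fun N => hBprob N
  have heq : ℙ (A k) = ℙ (A 0) :=
    tendsto_nhds_unique (hT k) (hfun ▸ hT 0)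
  have hA0 : {ω | ∀ n : ℕ, 1 ≤ n → (n : ℝ) * m < ∑ i ∈ Finset.range n, Y i ω} = A 0 := by
    ext ω
    simp only [hA, Set.mem_setOf_eq, Nat.zero_add]
  rw [hA0, ← heq]
  exact pos_iff_ne_zero.mpr hk

/-- Punctured-arrival-process lemma, abstract form: if `X i` are i.i.d. nonnegative
integrable random variables with `E[X 1] > m`, then with probability greater than `0`
the partial sums satisfy `∑_{i=1}^n X i > n * m` for every `n ≥ 1`. -/
theorem iid_partial_sums_exceed_linear_forever
    {Ω : Type*} [MeasureSpace Ω] [IsProbabilityMeasure (ℙ : Measure Ω)]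
    (X : ℕ → Ω → ℝ) (m : ℝ)
    (hmeas : ∀ i, Measurable (X i))
    (hindep : iIndepFun (fun (i : ℕ) => X (i + 1)) ℙ)
    (hident : ∀ i : ℕ, IdentDistrib (X (i + 1)) (X 1) ℙ ℙ)
    (hnn : ∀ i, ∀ᵐ ω ∂ℙ, 0 ≤ X i ω)
    (hint : Integrable (X 1) ℙ)
    (hmean : m < ∫ ω, X 1 ω ∂ℙ) :
    0 < ℙ {ω | ∀ n : ℕ, 1 ≤ n → (n : ℝ) * m < ∑ i ∈ Finset.Icc 1 n, X i ω} := by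
  have key := aux_main (fun i => X (i + 1)) m (fun i => hmeas _) hindep
    (fun i => (hident i).trans (hident 0).symm) hint hmean
  have hset : {ω | ∀ n : ℕ, 1 ≤ n → (n : ℝ) * m < ∑ i ∈ Finset.Icc 1 n, X i ω}
      = {ω | ∀ n : ℕ, 1 ≤ n → (n : ℝ) * m < ∑ i ∈ Finset.range n, X (i + 1) ω} := by
    ext ω
    simp only [Set.mem_setOf_eq, sum_Icc_one_eq (fun i => X i ω)]
  rw [hset]
  exact key
end

section
/- Let (X_i)_{i≥1} be independent and identically distributed integrable real-valued random variables on a probability space with E[X_1] < 0. Then P(∀ n ≥ 1 : ∑_{i=1}^n X_i < 0) > 0. -/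
open MeasureTheory ProbabilityTheory Filter Topology

lemma ndw_law_tuple {Ω : Type*} [MeasureSpace Ω] [IsProbabilityMeasure (ℙ : Measure Ω)]
    (X : ℕ → Ω → ℝ)
    (hmeas : ∀ i, Measurable (X i))
    (hindep : iIndepFun (fun (i : ℕ) => X (i + 1)) ℙ)
    (hident : ∀ i : ℕ, IdentDistrib (X (i + 1)) (X 1) ℙ ℙ)
    (k N : ℕ) :
    Measure.map (fun ω (i : Fin N) => X (k + i + 1) ω) ℙ
      = Measure.pi (fun _ : Fin N => Measure.map (X 1) ℙ) := by
  symm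
  apply Measure.pi_eq
  intro s hs
  rw [Measure.map_apply (measurable_pi_lambda _ fun i => hmeas _)
    (MeasurableSet.univ_pi hs)]
  set sets : ℕ → Set ℝ := fun j =>
    if h : k ≤ j ∧ j - k < N then s ⟨j - k, h.2⟩ else Set.univ with hsets
  have hsets_meas : ∀ j, MeasurableSet (sets j) := by
    intro j
    rw [hsets]
    dsimp only
    split
    · exact hs _
    · exact MeasurableSet.univ
  have hsets_eq : ∀ i : Fin N, sets (k + i) = s i := by
    intro i
    have h1 : k ≤ k + (i : ℕ) ∧ k + (i : ℕ) - k < N := by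
      constructor
      · omega
      · have := i.2; omega
    have h2 : ∀ hh : k ≤ k + (i : ℕ) ∧ k + (i : ℕ) - k < N,
        (⟨k + (i : ℕ) - k, hh.2⟩ : Fin N) = i := by
      intro hh
      apply Fin.ext
      simp only []
      omega
    rw [hsets]
    dsimp only
    rw [dif_pos h1, h2 h1]
  have hinj : Function.Injective (fun i : Fin N => k + (i : ℕ)) := by
    intro a b hab
    simp only at hab
    exact Fin.ext (by omega)
  have hpre : (fun ω (i : Fin N) => X (k + i + 1) ω) ⁻¹' (Set.pi Set.univ s)
      = ⋂ j ∈ Finset.image (fun i : Fin N => k + (i : ℕ)) Finset.univ,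
          (X (j + 1)) ⁻¹' (sets j) := by
    ext ω
    simp only [Set.mem_preimage, Set.mem_pi, Set.mem_univ, forall_true_left,
      Set.mem_iInter, Finset.mem_image, Finset.mem_univ, true_and]
    constructor
    · rintro h j ⟨i, rfl⟩
      rw [hsets_eq i]
      exact h i
    · intro h i
      have := h (k + i) ⟨i, rfl⟩
      rwa [hsets_eq i] at this
  rw [hpre, hindep.measure_inter_preimage_eq_mul _ (fun j _ => hsets_meas j),
    Finset.prod_image (fun a _ b _ h => hinj h)]
  apply Finset.prod_congr rfl
  intro i _
  rw [hsets_eq i, Measure.map_apply (hmeas 1) (hs i)]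
  exact (hident (k + i)).measure_mem_eq (hs i)

/-- A random walk with i.i.d. integrable increments of strictly negative mean stays
strictly negative forever with probability greater than `0`. -/
theorem negative_drift_walk_stays_negative
    {Ω : Type*} [MeasureSpace Ω] [IsProbabilityMeasure (ℙ : Measure Ω)]
    (X : ℕ → Ω → ℝ)
    (hmeas : ∀ i, Measurable (X i))
    (hindep : iIndepFun (fun (i : ℕ) => X (i + 1)) ℙ)
    (hident : ∀ i : ℕ, IdentDistrib (X (i + 1)) (X 1) ℙ ℙ)
    (hint : Integrable (X 1) ℙ)
    (hmean : ∫ ω, X 1 ω ∂ℙ < 0) :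
    0 < ℙ {ω | ∀ n : ℕ, 1 ≤ n → ∑ i ∈ Finset.Icc 1 n, X i ω < 0} := by
  -- the partial sums
  set S : ℕ → Ω → ℝ := fun n ω => ∑ j ∈ Finset.range n, X (j + 1) ω with hS
  have hsum_eq : ∀ (n : ℕ) (ω : Ω), ∑ i ∈ Finset.Icc 1 n, X i ω = S n ω := by
    intro n ω
    rw [hS]
    dsimp only
    rw [← Finset.Ico_add_one_right_eq_Icc, Finset.sum_Ico_eq_sum_range]
    exact Finset.sum_congr (by norm_num) fun j _ => by rw [Nat.add_comm 1 j]
  -- shifted partial sums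
  have hshift : ∀ (k n : ℕ) (ω : Ω),
      ∑ j ∈ Finset.range n, X (k + j + 1) ω = S (k + n) ω - S k ω := by
    intro k n ω
    rw [hS]
    dsimp only
    have h1 : ∑ j ∈ Finset.range n, X (k + j + 1) ω
        = ∑ j ∈ Finset.Ico k (k + n), X (j + 1) ω := by
      rw [Finset.sum_Ico_eq_sum_range]
      simp only [Nat.add_sub_cancel_left]
    rw [h1, Finset.sum_Ico_eq_sub _ (Nat.le_add_right k n)]
  -- the events
  set E : ℕ → Set Ω := fun k =>
    {ω | ∀ n : ℕ, 1 ≤ n → ∑ j ∈ Finset.range n, X (k + j + 1) ω < 0} with hE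
  set D : ℕ → ℕ → Set Ω := fun k N =>
    {ω | ∀ n : ℕ, 1 ≤ n → n ≤ N → ∑ j ∈ Finset.range n, X (k + j + 1) ω < 0} with hD
  have hDmeas : ∀ k N, MeasurableSet (D k N) := by
    intro k N
    have : D k N = ⋂ n ∈ {n : ℕ | 1 ≤ n ∧ n ≤ N},
        {ω | ∑ j ∈ Finset.range n, X (k + j + 1) ω < 0} := by
      ext ω; simp only [hD, Set.mem_setOf_eq, Set.mem_iInter, and_imp]
    rw [this]
    refine MeasurableSet.biInter (Set.to_countable _) fun n _ => ?_
    exact measurableSet_lt (by fun_prop) measurable_const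
  have hEmeas : ∀ k, MeasurableSet (E k) := by
    intro k
    have : E k = ⋂ n ∈ {n : ℕ | 1 ≤ n},
        {ω | ∑ j ∈ Finset.range n, X (k + j + 1) ω < 0} := by
      ext ω; simp [hE]
    rw [this]
    refine MeasurableSet.biInter (Set.to_countable _) fun n _ => ?_
    exact measurableSet_lt (by fun_prop) measurable_const
  -- D k N expressed via the law of the tuple
  have hDlaw : ∀ k N, ℙ (D k N) = ℙ (D 0 N) := by
    intro k N
    set B : Set (Fin N → ℝ) :=
      {f | ∀ n : ℕ, 1 ≤ n → n ≤ N →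
        ∑ j ∈ Finset.range n, (if h : j < N then f ⟨j, h⟩ else 0) < 0} with hB
    have hBmeas : MeasurableSet B := by
      have : B = ⋂ n ∈ {n : ℕ | 1 ≤ n ∧ n ≤ N},
          {f : Fin N → ℝ |
            ∑ j ∈ Finset.range n, (if h : j < N then f ⟨j, h⟩ else 0) < 0} := by
        ext f; simp only [hB, Set.mem_setOf_eq, Set.mem_iInter, and_imp]
      rw [this]
      refine MeasurableSet.biInter (Set.to_countable _) fun n _ => ?_
      refine measurableSet_lt ?_ measurable_const
      refine Finset.measurable_sum _ fun j _ => ?_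
      by_cases h : j < N
      · simpa [h] using measurable_pi_apply (⟨j, h⟩ : Fin N)
      · simp [h]
    have hpreim : ∀ k' : ℕ,
        (fun ω (i : Fin N) => X (k' + i + 1) ω) ⁻¹' B = D k' N := by
      intro k'
      ext ω
      simp only [Set.mem_preimage, hB, Set.mem_setOf_eq, hD]
      have heq : ∀ n : ℕ, n ≤ N →
          (∑ j ∈ Finset.range n, if h : j < N then X (k' + j + 1) ω else 0)
            = ∑ j ∈ Finset.range n, X (k' + j + 1) ω := by
        intro n hnN
        refine Finset.sum_congr rfl fun j hj => ?_
        exact dif_pos (lt_of_lt_of_le (Finset.mem_range.1 hj) hnN)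
      constructor
      · intro h n hn1 hnN
        have := h n hn1 hnN
        rwa [heq n hnN] at this
      · intro h n hn1 hnN
        rw [heq n hnN]
        exact h n hn1 hnN
    have hmap : ∀ k' : ℕ, ℙ (D k' N)
        = Measure.pi (fun _ : Fin N => Measure.map (X 1) ℙ) B := by
      intro k'
      rw [← ndw_law_tuple X hmeas hindep hident k' N,
        Measure.map_apply (measurable_pi_lambda _ fun i => hmeas _) hBmeas, hpreim]
    rw [hmap k, hmap 0]
  -- E k = intersection of the D k N, so all E k have the same measure
  have hEiInter : ∀ k, E k = ⋂ N, D k N := by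
    intro k
    ext ω
    simp only [hE, hD, Set.mem_setOf_eq, Set.mem_iInter]
    exact ⟨fun h N n hn1 _ => h n hn1, fun h n hn1 => h n n hn1 le_rfl⟩
  have hElaw : ∀ k, ℙ (E k) = ℙ (E 0) := by
    intro k
    have hten : ∀ k' : ℕ, Tendsto (fun N => ℙ (D k' N)) atTop (𝓝 (ℙ (E k'))) := by
      intro k'
      rw [hEiInter k']
      exact tendsto_measure_iInter_atTop (fun N => (hDmeas k' N).nullMeasurableSet)
        (fun a b hab ω hω n hn1 hn2 => hω n hn1 (hn2.trans hab))
        ⟨0, measure_ne_top _ _⟩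
    have h2 : Tendsto (fun N => ℙ (D k N)) atTop (𝓝 (ℙ (E 0))) := by
      have := hten 0
      simpa only [← hDlaw k] using this
    exact tendsto_nhds_unique (hten k) h2
  -- the target set is E 0
  have htarget : {ω | ∀ n : ℕ, 1 ≤ n → ∑ i ∈ Finset.Icc 1 n, X i ω < 0} = E 0 := by
    ext ω
    simp only [hE, Set.mem_setOf_eq]
    constructor
    · intro h n hn
      have := h n hn
      rw [hsum_eq] at this
      simpa [hS] using this
    · intro h n hn
      rw [hsum_eq]
      simpa [hS] using h n hn
  rw [htarget]
  -- suppose for contradiction that ℙ (E 0) = 0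
  by_contra hcon
  have hE0 : ℙ (E 0) = 0 := le_antisymm (not_lt.1 hcon) (zero_le)
  have hEk0 : ∀ k, ℙ (E k) = 0 := fun k => (hElaw k).trans hE0
  -- almost surely, for every k there is n ≥ 1 with S (k+n) ≥ S k
  have hae1 : ∀ᵐ ω ∂(ℙ : Measure Ω), ∀ k : ℕ, ∃ n : ℕ, 1 ≤ n ∧ S k ω ≤ S (k + n) ω := by
    rw [ae_all_iff]
    intro k
    have : ∀ᵐ ω ∂(ℙ : Measure Ω), ω ∉ E k := by
      rw [ae_iff]
      simpa using hEk0 k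
    filter_upwards [this] with ω hω
    simp only [hE, Set.mem_setOf_eq, not_forall] at hω
    obtain ⟨n, hn1, hn2⟩ := hω
    refine ⟨n, hn1, ?_⟩
    have := hshift k n ω
    nlinarith [not_lt.1 hn2]
  -- strong law of large numbers
  have hae2 : ∀ᵐ ω ∂(ℙ : Measure Ω),
      Tendsto (fun n : ℕ => S n ω / n) atTop (𝓝 (∫ ω, X 1 ω ∂ℙ)) := by
    have := strong_law_ae_real (fun i => X (i + 1)) hint
      (fun i j hij => hindep.indepFun hij)
      (fun i => (hident i).trans (hident 0).symm)
    filter_upwards [this] with ω hω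
    exact hω
  obtain ⟨ω, h1, h2⟩ := ((hae1.and hae2).exists)
  -- eventually S n ω < 0
  have hev : ∀ᶠ n : ℕ in atTop, S n ω < 0 := by
    have hlt : ∀ᶠ n : ℕ in atTop, S n ω / n < 0 :=
      h2.eventually (Filter.Tendsto.eventually_lt_const hmean tendsto_id)
    filter_upwards [hlt, eventually_ge_atTop 1] with n hn hn1
    have hnpos : (0 : ℝ) < n := by exact_mod_cast hn1
    rcases div_neg_iff.1 hn with ⟨_, h⟩ | ⟨h, _⟩
    · linarith
    · exact h
  obtain ⟨M, hM⟩ := hev.exists_forall_of_atTop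
  -- build an increasing sequence of times where S is nonnegative
  choose nn hnn1 hnn2 using h1
  set g : ℕ → ℕ := fun m => Nat.rec 0 (fun _ k => k + nn k) m with hg
  have hkey : ∀ m, m ≤ g m ∧ 0 ≤ S (g m) ω := by
    intro m
    induction m with
    | zero => exact ⟨Nat.zero_le _, by simp [hg, hS]⟩
    | succ m ih =>
      have hgs : g (m + 1) = g m + nn (g m) := rfl
      constructor
      · rw [hgs]; have := hnn1 (g m); omega
      · rw [hgs]; exact ih.2.trans (hnn2 (g m))
  have hge : M ≤ g M := (hkey M).1
  have := hM (g M) hge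
  have := (hkey M).2
  linarith
end

section
/- Let λ > 0 and let (E_i)_{i≥1} be independent and identically distributed random variables, each with the exponential distribution of rate λ. Define the arrival times A_n = ∑_{i=1}^n E_i and the counting process N(t) = #{n ≥ 1 : A_n ≤ t} for t ≥ 0. Then for every ε > 0, the probability P(∀ t > 0 : N(t) ≤ (λ + ε)·t) is strictly greater than 0. -/
open MeasureTheory ProbabilityTheory Filter
open scoped ENNReal NNReal
open Real Set Topology

section PoissonAux
lemma myIntegrableAux {lam : ℝ} (hlam : 0 < lam) :
    Integrable (fun x : ℝ => (exponentialPDFReal lam x).toNNReal • x) (volume : Measure ℝ) := by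
  have h1 : IntegrableOn (fun x : ℝ => x ^ (1:ℝ) * rexp (-lam * x ^ (1:ℝ))) (Ioi 0) :=
    integrableOn_rpow_mul_exp_neg_mul_rpow (by norm_num) zero_lt_one hlam
  have h2 : IntegrableOn (fun x : ℝ => lam * rexp (-(lam * x)) * x) (Ioi 0) := by
    refine IntegrableOn.congr_fun (Integrable.const_mul h1 lam : IntegrableOn _ _ _) (fun x hx => ?_) measurableSet_Ioi
    simp only [rpow_one]
    ring
  have h3 : IntegrableOn (fun x : ℝ => lam * rexp (-(lam * x)) * x) (Ici 0) := by
    rwa [integrableOn_Ici_iff_integrableOn_Ioi]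
  have h4 : Integrable (Set.indicator (Ici 0) (fun x : ℝ => lam * rexp (-(lam * x)) * x)) volume := by
    rwa [integrable_indicator_iff measurableSet_Ici]
  refine h4.congr (Filter.Eventually.of_forall fun x => ?_)
  by_cases hx : 0 ≤ x
  · simp [Set.indicator_of_mem (mem_Ici.mpr hx), exponentialPDFReal, gammaPDFReal, if_pos hx,
      NNReal.smul_def, Real.coe_toNNReal _ (by positivity), mul_comm]
    left; positivity
  · simp [Set.indicator_of_notMem (fun h => hx (mem_Ici.mp h)), exponentialPDFReal, gammaPDFReal,
      if_neg hx, NNReal.smul_def]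

lemma myDensity (lam : ℝ) :
    expMeasure lam = (volume : Measure ℝ).withDensity
      (fun x => ((exponentialPDFReal lam x).toNNReal : ℝ≥0∞)) := rfl

lemma myMeasAux (lam : ℝ) : Measurable (fun x : ℝ => (exponentialPDFReal lam x).toNNReal) :=
  (measurable_exponentialPDFReal lam).real_toNNReal

lemma myIntegrable {lam : ℝ} (hlam : 0 < lam) : Integrable id (expMeasure lam) := by
  rw [myDensity, integrable_withDensity_iff_integrable_smul (myMeasAux lam)]
  exact myIntegrableAux hlam

lemma myMean {lam : ℝ} (hlam : 0 < lam) : ∫ x, x ∂(expMeasure lam) = 1 / lam := by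
  rw [myDensity]
  rw [integral_withDensity_eq_integral_smul (myMeasAux lam) (fun x => x)]
  have hind : (fun x : ℝ => (exponentialPDFReal lam x).toNNReal • x)
      = Set.indicator (Ici 0) (fun x : ℝ => lam * (x * rexp (-(lam * x)))) := by
    funext x
    by_cases hx : 0 ≤ x
    · simp only [Set.indicator_of_mem (mem_Ici.mpr hx), exponentialPDFReal, gammaPDFReal,
        if_pos hx, NNReal.smul_def, Real.coe_toNNReal _ (by positivity)]
      simp [Real.rpow_one, Real.Gamma_one]
      rw [max_eq_left (by positivity : (0:ℝ) ≤ lam * rexp (-(lam * x)))]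
      ring
    · simp [Set.indicator_of_notMem (fun h => hx (mem_Ici.mp h)), exponentialPDFReal,
        gammaPDFReal, if_neg hx, NNReal.smul_def]
  rw [hind, integral_indicator measurableSet_Ici, integral_Ici_eq_integral_Ioi,
    integral_const_mul]
  have h2 : ∫ x in Ioi (0:ℝ), x * rexp (-(lam * x))
      = ∫ x in Ioi (0:ℝ), x ^ ((2:ℝ) - 1) * rexp (-(lam * x)) := by
    refine setIntegral_congr_fun measurableSet_Ioi (fun x hx => ?_)
    norm_num
  rw [h2, integral_rpow_mul_exp_neg_mul_Ioi (by norm_num) hlam]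
  have : Real.Gamma 2 = 1 := by
    rw [show (2:ℝ) = 1 + 1 by norm_num, Real.Gamma_add_one one_ne_zero, Real.Gamma_one, mul_one]
  rw [this, mul_one]
  rw [show ((1:ℝ)/lam) ^ (2:ℝ) = (1/lam)^(2:ℕ) by rw [← Real.rpow_natCast]; norm_num]
  field_simp

lemma myTailPos {lam : ℝ} (hlam : 0 < lam) (a : ℝ) : 0 < expMeasure lam (Ici a) := by
  have hprob : IsProbabilityMeasure (expMeasure lam) := isProbabilityMeasure_expMeasure hlam
  set b : ℝ := max a 0 with hb
  have hba : Ici b ⊆ Ici a := Ici_subset_Ici.mpr (le_max_left a 0)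
  refine lt_of_lt_of_le ?_ (measure_mono hba)
  by_contra h0
  push_neg at h0
  have h0' : expMeasure lam (Ici b) = 0 := le_antisymm h0 zero_le
  have hIic : expMeasure lam (Iic b) = ENNReal.ofReal (1 - rexp (-(lam * b))) := by
    rw [myDensity, withDensity_apply _ measurableSet_Iic]
    have := lintegral_exponentialPDF_eq_antiDeriv hlam b
    rw [if_pos (le_max_right a 0)] at this
    exact this
  have huniv : (1:ℝ≥0∞) = expMeasure lam univ := (measure_univ (μ := expMeasure lam)).symm
  have hcover : (univ : Set ℝ) ⊆ Iic b ∪ Ici b := fun x _ => (le_total x b).imp id id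
  have hle : (1:ℝ≥0∞) ≤ expMeasure lam (Iic b) + expMeasure lam (Ici b) :=
    huniv.le.trans ((measure_mono hcover).trans (measure_union_le _ _))
  rw [h0', add_zero, hIic] at hle
  have : ENNReal.ofReal (1 - rexp (-(lam * b))) < 1 :=
    ENNReal.ofReal_lt_one.mpr (by nlinarith [Real.exp_pos (-(lam * b))])
  exact absurd hle (not_le.mpr this)

end PoissonAux

/-- For a Poisson counting process of rate `λ` (built from i.i.d. exponential(`λ`)
interarrival times `E i`, arrival times `A n = ∑_{i=1}^n E i`, and counting process
`N t = #{n ≥ 1 : A n ≤ t}`), for every `ε > 0` the event that `N t ≤ (λ + ε) t` for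
all `t > 0` has probability greater than `0`. -/
theorem poisson_counting_stays_below_rate
    {Ω : Type*} [MeasureSpace Ω] [IsProbabilityMeasure (ℙ : Measure Ω)]
    (lam : ℝ) (hlam : 0 < lam)
    (E : ℕ → Ω → ℝ)
    (hmeas : ∀ i, Measurable (E i))
    (hindep : iIndepFun (fun (i : ℕ) => E (i + 1)) ℙ)
    (hdist : ∀ i : ℕ, Measure.map (E (i + 1)) ℙ = expMeasure lam)
    (ε : ℝ) (hε : 0 < ε) :
    0 < ℙ {ω | ∀ t : ℝ, 0 < t →
      (({n : ℕ | 1 ≤ n ∧ (∑ i ∈ Finset.Icc 1 n, E i ω) ≤ t}.encard : ℕ∞) : ℝ≥0∞)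
        ≤ ENNReal.ofReal ((lam + ε) * t)} := by
  set c : ℝ := 1 / (lam + ε) with hc
  have hlamε : 0 < lam + ε := by linarith
  have hcpos : 0 < c := by positivity
  have hclt : c < 1 / lam := by
    rw [hc, div_lt_div_iff₀ hlamε hlam]
    nlinarith
  -- the shifted sequence
  set Y : ℕ → Ω → ℝ := fun i => E (i + 1 + 1) with hY
  set V : ℕ → Ω → ℝ := fun m ω => ∑ i ∈ Finset.range m, Y i ω with hV
  have hYmeas : ∀ i, Measurable (Y i) := fun i => hmeas _
  have hVmeas : ∀ m, Measurable (V m) := fun m => Finset.measurable_sum _ fun i _ => hYmeas i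
  -- strong law of large numbers for Y
  have hint : Integrable (Y 0) ℙ := by
    have h := (integrable_map_measure (f := Y 0) (g := id)
      aestronglyMeasurable_id (hmeas _).aemeasurable).mp
      (by rw [hdist 1]; exact myIntegrable hlam)
    simpa [Function.comp] using h
  have hmean : (∫ ω, Y 0 ω ∂ℙ) = 1 / lam := by
    have h := integral_map (μ := ℙ) (φ := Y 0) (f := id) (hmeas _).aemeasurable aestronglyMeasurable_id
    rw [hdist 1] at h
    simpa [Function.comp, myMean hlam] using h.symm
  have hpair : Pairwise (Function.onFun (IndepFun · · ℙ) Y) := by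
    intro i j hij
    exact hindep.indepFun (by omega : i + 1 ≠ j + 1)
  have hident : ∀ i, IdentDistrib (Y i) (Y 0) ℙ ℙ := fun i =>
    ⟨(hYmeas i).aemeasurable, (hYmeas 0).aemeasurable, by rw [hY]; rw [hdist, hdist]⟩
  have hslln : ∀ᵐ ω ∂ℙ, Tendsto (fun n : ℕ => (∑ i ∈ Finset.range n, Y i ω) / n)
      atTop (𝓝 (1 / lam)) := by
    have := strong_law_ae_real Y hint hpair hident
    rwa [hmean] at this
  -- almost surely, the shifted sums stay above the line m*c - M for some natural M
  have hae : ∀ᵐ ω ∂ℙ, ∃ M : ℕ, ∀ m : ℕ, (m : ℝ) * c - M ≤ V m ω := by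
    filter_upwards [hslln] with ω hω
    have h1 : ∀ᶠ m : ℕ in atTop, (m : ℝ) * c ≤ V m ω := by
      filter_upwards [hω.eventually (eventually_gt_nhds hclt), eventually_ge_atTop 1]
        with m hm hm1
      have hmpos : (0:ℝ) < m := by exact_mod_cast hm1
      rw [lt_div_iff₀ hmpos] at hm
      have : V m ω = ∑ i ∈ Finset.range m, Y i ω := rfl
      linarith
    obtain ⟨m0, hm0⟩ := eventually_atTop.mp h1
    refine ⟨⌈∑ k ∈ Finset.range m0, |(k : ℝ) * c - V k ω|⌉₊, fun m => ?_⟩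
    rcases le_or_gt m0 m with h | h
    · have := hm0 m h
      have : (m : ℝ) * c - ⌈∑ k ∈ Finset.range m0, |(k : ℝ) * c - V k ω|⌉₊ ≤ (m:ℝ) * c := by
        have : (0:ℝ) ≤ ⌈∑ k ∈ Finset.range m0, |(k : ℝ) * c - V k ω|⌉₊ := by positivity
        linarith
      linarith [hm0 m h]
    · have hterm : (m : ℝ) * c - V m ω ≤ ∑ k ∈ Finset.range m0, |(k : ℝ) * c - V k ω| := by
        calc (m : ℝ) * c - V m ω ≤ |(m : ℝ) * c - V m ω| := le_abs_self _
        _ ≤ ∑ k ∈ Finset.range m0, |(k : ℝ) * c - V k ω| :=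
          Finset.single_le_sum (f := fun k : ℕ => |(k : ℝ) * c - V k ω|) (fun k _ => abs_nonneg _) (Finset.mem_range.mpr h)
      have := hterm.trans (Nat.le_ceil _)
      linarith
  -- find M with positive probability
  set W : ℕ → Set Ω := fun M => {ω | ∀ m : ℕ, (m : ℝ) * c - M ≤ V m ω} with hW
  have hWmeas : ∀ M, MeasurableSet (W M) := by
    intro M
    have : W M = ⋂ m : ℕ, (V m) ⁻¹' (Ici ((m : ℝ) * c - M)) := by
      ext ω; simp [hW, mem_iInter]
    rw [this]
    exact MeasurableSet.iInter fun m => (hVmeas m) measurableSet_Ici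
  obtain ⟨M, hM⟩ : ∃ M : ℕ, 0 < ℙ (W M) := by
    by_contra hcon
    push_neg at hcon
    have hz : ∀ M, ℙ (W M) = 0 := fun M => le_antisymm (hcon M) zero_le
    have hU : ℙ (⋃ M : ℕ, W M) = 0 := measure_iUnion_null hz
    have hC : ℙ ((⋃ M : ℕ, W M)ᶜ) = 0 := by
      refine measure_mono_null ?_ (ae_iff.mp hae)
      intro ω hω
      simp only [mem_compl_iff, mem_iUnion, not_exists] at hω
      simpa [hW] using fun M => hω M
    have : (1 : ℝ≥0∞) ≤ 0 := by
      calc (1:ℝ≥0∞) = ℙ (univ : Set Ω) := (measure_univ).symm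
      _ = ℙ ((⋃ M : ℕ, W M) ∪ (⋃ M : ℕ, W M)ᶜ) := by rw [union_compl_self]
      _ ≤ ℙ (⋃ M : ℕ, W M) + ℙ ((⋃ M : ℕ, W M)ᶜ) := measure_union_le _ _
      _ = 0 := by rw [hU, hC, add_zero]
    simp at this
  -- the first interarrival is large, with positive probability
  set B : Set Ω := (E (0 + 1)) ⁻¹' (Ici (c + M)) with hB
  have hBmeas : MeasurableSet B := (hmeas _) measurableSet_Ici
  have hBpos : 0 < ℙ B := by
    have : ℙ B = Measure.map (E (0 + 1)) ℙ (Ici (c + M)) :=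
      (Measure.map_apply (hmeas _) measurableSet_Ici).symm
    rw [this, hdist 0]
    exact myTailPos hlam _
  -- independence of B and W M
  have hiI : iIndep (fun i => MeasurableSpace.comap (fun ω => E (i + 1) ω) inferInstance) ℙ :=
    (iIndepFun_iff_iIndep _ _ _).mp hindep
  have hIndepSup : Indep
      (⨆ i ∈ ({0} : Set ℕ), MeasurableSpace.comap (fun ω => E (i + 1) ω) inferInstance)
      (⨆ i ∈ ({0} : Set ℕ)ᶜ, MeasurableSpace.comap (fun ω => E (i + 1) ω) inferInstance) ℙ :=
    indep_iSup_of_disjoint (fun i => (hmeas (i + 1)).comap_le) hiI disjoint_compl_right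
  have hBmem : MeasurableSet[⨆ i ∈ ({0} : Set ℕ),
      MeasurableSpace.comap (fun ω => E (i + 1) ω) inferInstance] B := by
    have h0 : MeasurableSet[MeasurableSpace.comap (fun ω => E (0 + 1) ω) inferInstance] B :=
      ⟨Ici (c + M), measurableSet_Ici, rfl⟩
    have hle : MeasurableSpace.comap (fun ω => E (0 + 1) ω) inferInstance ≤
        ⨆ i ∈ ({0} : Set ℕ), MeasurableSpace.comap (fun ω => E (i + 1) ω) inferInstance :=
      le_biSup (f := fun i => MeasurableSpace.comap (fun ω => E (i + 1) ω) inferInstance)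
        (mem_singleton (0:ℕ))
    exact hle _ h0
  have hWmem : MeasurableSet[⨆ i ∈ ({0} : Set ℕ)ᶜ,
      MeasurableSpace.comap (fun ω => E (i + 1) ω) inferInstance] (W M) := by
    have hVm : ∀ m, Measurable[⨆ i ∈ ({0} : Set ℕ)ᶜ,
        MeasurableSpace.comap (fun ω => E (i + 1) ω) inferInstance] (V m) := by
      intro m
      refine Finset.measurable_sum _ fun i _ => ?_
      have h1 : Measurable[MeasurableSpace.comap (fun ω => E (i + 1 + 1) ω) inferInstance]
          (Y i) := measurable_iff_comap_le.mpr le_rfl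
      exact h1.mono (le_biSup (f := fun j => MeasurableSpace.comap (fun ω => E (j + 1) ω)
        inferInstance) (by simp : (i + 1 : ℕ) ∈ ({0} : Set ℕ)ᶜ)) le_rfl
    have : W M = ⋂ m : ℕ, (V m) ⁻¹' (Ici ((m : ℝ) * c - M)) := by
      ext ω; simp [hW, mem_iInter]
    rw [this]
    exact MeasurableSet.iInter fun m => (hVm m) measurableSet_Ici
  have hmul : ℙ (B ∩ W M) = ℙ B * ℙ (W M) :=
    (hIndepSup.indepSet_of_measurableSet hBmem hWmem).measure_inter_eq_mul
  have hBWpos : 0 < ℙ (B ∩ W M) := by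
    rw [hmul]
    exact ENNReal.mul_pos hBpos.ne' hM.ne'
  -- inclusion in the target event
  refine lt_of_lt_of_le hBWpos (measure_mono ?_)
  rintro ω ⟨hωB, hωW⟩
  have hA : ∀ n : ℕ, 1 ≤ n → (n : ℝ) * c ≤ ∑ i ∈ Finset.Icc 1 n, E i ω := by
    intro n hn
    obtain ⟨k, rfl⟩ : ∃ k, n = k + 1 := ⟨n - 1, by omega⟩
    have hsum : ∑ i ∈ Finset.Icc 1 (k + 1), E i ω
        = (∑ i ∈ Finset.range k, Y i ω) + E (0 + 1) ω := by
      rw [← Finset.Ico_add_one_right_eq_Icc, Finset.sum_Ico_eq_sum_range]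
      rw [show k + 1 + 1 - 1 = k + 1 by omega]
      rw [Finset.sum_range_succ']
      congr 1
      refine Finset.sum_congr rfl fun i _ => ?_
      simp [hY, show 1 + (i + 1) = i + 1 + 1 by omega]
    have h1 : c + M ≤ E (0 + 1) ω := hωB
    have h2 : (k : ℝ) * c - M ≤ ∑ i ∈ Finset.range k, Y i ω := hωW k
    rw [hsum]
    push_cast
    linarith
  intro t ht
  set K : Set ℕ := {n : ℕ | 1 ≤ n ∧ (∑ i ∈ Finset.Icc 1 n, E i ω) ≤ t} with hK
  set N : ℕ := ⌊(lam + ε) * t⌋₊ with hN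
  have hsub : K ⊆ ↑(Finset.Icc 1 N) := by
    rintro n ⟨hn1, hnt⟩
    have h3 : (n : ℝ) * c ≤ t := le_trans (hA n hn1) hnt
    have h4 : (n : ℝ) ≤ (lam + ε) * t := by
      rw [hc, mul_one_div, div_le_iff₀ hlamε] at h3
      nlinarith
    simp only [Finset.coe_Icc, mem_Icc]
    exact ⟨hn1, Nat.le_floor h4⟩
  have hcard : K.encard ≤ (N : ℕ∞) := by
    refine le_trans (Set.encard_mono hsub) ?_
    rw [Set.encard_coe_eq_coe_finsetCard, Nat.card_Icc]
    simp
  calc ((K.encard : ℕ∞) : ℝ≥0∞) ≤ ((N : ℕ∞) : ℝ≥0∞) := by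
        exact_mod_cast ENat.toENNReal_le.mpr hcard
  _ = (N : ℝ≥0∞) := by simp
  _ = ENNReal.ofReal (N : ℝ) := (ENNReal.ofReal_natCast N).symm
  _ ≤ ENNReal.ofReal ((lam + ε) * t) :=
      ENNReal.ofReal_le_ofReal (Nat.floor_le (by positivity))
end

section
/- Let λ > 0, let (E_i)_{i≥1} be independent and identically distributed random variables, each with the exponential distribution of rate λ, and let (C_i)_{i≥1} be independent and identically distributed nonnegative integrable random variables with mean m > 0, with the sequence (C_i) independent of the sequence (E_i). Define the arrival times A_n = ∑_{i=1}^n E_i and the compound score process S(t) = ∑_{n : A_n ≤ t} C_n for t ≥ 0. Then for every ε > 0, the probability P(∀ t > 0 : S(t) ≤ (λ·m + ε)·t) is strictly greater than 0. -/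
open MeasureTheory ProbabilityTheory Filter
open scoped ENNReal NNReal


open MeasureTheory ProbabilityTheory Filter Set Real
open scoped ENNReal NNReal

namespace CPAux

lemma integrableOn_id_mul_exp {r : ℝ} (hr : 0 < r) :
    IntegrableOn (fun x : ℝ => x * Real.exp (-(r * x))) (Set.Ioi 0) := by
  have h := integrableOn_rpow_mul_exp_neg_mul_rpow (p := 1) (s := 1) (b := r)
    (by norm_num) zero_lt_one hr
  refine h.congr_fun (fun x hx => ?_) measurableSet_Ioi
  simp [Real.rpow_one, neg_mul]

lemma integral_id_mul_exp {r : ℝ} (hr : 0 < r) :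
    ∫ x in Set.Ioi (0:ℝ), x * Real.exp (-(r * x)) = (1 / r) ^ 2 := by
  have h := Real.integral_rpow_mul_exp_neg_mul_Ioi (a := 2) (r := r) (by norm_num) hr
  have h2 : Real.Gamma 2 = 1 := by
    rw [show (2:ℝ) = 1 + 1 by norm_num, Real.Gamma_add_one one_ne_zero, Real.Gamma_one, mul_one]
  rw [h2, mul_one] at h
  calc ∫ x in Set.Ioi (0:ℝ), x * Real.exp (-(r * x))
      = ∫ t in Set.Ioi (0:ℝ), t ^ ((2:ℝ) - 1) * Real.exp (-(r * t)) := by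
        refine setIntegral_congr_fun measurableSet_Ioi (fun x hx => ?_)
        rw [show (2:ℝ) - 1 = 1 by norm_num, Real.rpow_one]
    _ = (1 / r) ^ (2:ℝ) := h
    _ = (1 / r) ^ 2 := by
        rw [show ((2:ℝ):ℝ) = ((2:ℕ):ℝ) by norm_num, Real.rpow_natCast]

end CPAux

namespace CPAux

lemma expPDFReal_eq {r : ℝ} (x : ℝ) :
    exponentialPDFReal r x = if 0 ≤ x then r * Real.exp (-(r * x)) else 0 := by
  rw [exponentialPDFReal, gammaPDFReal]
  split_ifs with h
  · rw [Real.rpow_one, Real.Gamma_one, div_one, sub_self, Real.rpow_zero, mul_one]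
  · rfl

lemma expPDFReal_nonneg {r : ℝ} (hr : 0 < r) (x : ℝ) : 0 ≤ exponentialPDFReal r x := by
  rw [expPDFReal_eq]; split_ifs <;> positivity

lemma measurable_expPDF (r : ℝ) : Measurable (exponentialPDF r) :=
  (measurable_exponentialPDFReal r).ennreal_ofReal

lemma integrableOn_pdf_mul_Ioi {r : ℝ} (hr : 0 < r) :
    IntegrableOn (fun x : ℝ => exponentialPDFReal r x * x) (Set.Ioi 0) := by
  have h : IntegrableOn (fun x : ℝ => r * (x * Real.exp (-(r * x)))) (Set.Ioi 0) :=
    (integrableOn_id_mul_exp hr).const_mul r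
  refine h.congr_fun (fun x hx => ?_) measurableSet_Ioi
  rw [expPDFReal_eq, if_pos (le_of_lt hx)]; ring

lemma integrable_pdf_mul {r : ℝ} (hr : 0 < r) :
    Integrable (fun x : ℝ => exponentialPDFReal r x * x) := by
  rw [← integrableOn_univ, ← Set.Iic_union_Ioi (a := (0:ℝ))]
  refine IntegrableOn.union ?_ (integrableOn_pdf_mul_Ioi hr)
  have hz : ∀ x ∈ Set.Iic (0:ℝ), exponentialPDFReal r x * x = 0 := by
    intro x hx
    rcases lt_or_eq_of_le (Set.mem_Iic.mp hx) with h | h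
    · rw [expPDFReal_eq, if_neg (not_le.2 h), zero_mul]
    · rw [h, mul_zero]
  exact (integrableOn_congr_fun hz measurableSet_Iic).2 (integrableOn_zero)

lemma integral_pdf_mul {r : ℝ} (hr : 0 < r) :
    ∫ x : ℝ, exponentialPDFReal r x * x = r⁻¹ := by
  rw [← setIntegral_univ, ← Set.Iic_union_Ioi (a := (0:ℝ)),
    setIntegral_union (Set.Iic_disjoint_Ioi le_rfl) measurableSet_Ioi
      ((integrable_pdf_mul hr).integrableOn) (integrableOn_pdf_mul_Ioi hr)]
  have h1 : ∫ x in Set.Iic (0:ℝ), exponentialPDFReal r x * x = 0 := by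
    rw [setIntegral_congr_fun measurableSet_Iic (g := fun _ => (0:ℝ))]
    · simp
    · intro x hx
      show exponentialPDFReal r x * x = 0
      rcases lt_or_eq_of_le (Set.mem_Iic.mp hx) with h | h
      · rw [expPDFReal_eq, if_neg (not_le.2 h), zero_mul]
      · rw [h, mul_zero]
  have h2 : ∫ x in Set.Ioi (0:ℝ), exponentialPDFReal r x * x
      = r * ∫ x in Set.Ioi (0:ℝ), x * Real.exp (-(r * x)) := by
    rw [← integral_const_mul]
    refine setIntegral_congr_fun measurableSet_Ioi (fun x hx => ?_)
    rw [expPDFReal_eq, if_pos (le_of_lt hx)]; ring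
  rw [h1, h2, integral_id_mul_exp hr, zero_add]
  field_simp

lemma expMeasure_eq (r : ℝ) :
    expMeasure r = volume.withDensity (fun x => ((exponentialPDFReal r x).toNNReal : ℝ≥0∞)) := by
  rfl

lemma integrable_id_expMeasure {r : ℝ} (hr : 0 < r) :
    Integrable (id : ℝ → ℝ) (expMeasure r) := by
  have hrw : expMeasure r = volume.withDensity (exponentialPDF r) := rfl
  rw [hrw]
  rw [integrable_withDensity_iff (measurable_expPDF r) (by
    refine Filter.Eventually.of_forall (fun x => ?_)
    exact ENNReal.ofReal_lt_top)]
  refine (integrable_pdf_mul hr).congr (Filter.Eventually.of_forall (fun x => ?_))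
  show exponentialPDFReal r x * x = x * (exponentialPDF r x).toReal
  rw [show exponentialPDF r x = ENNReal.ofReal (exponentialPDFReal r x) from rfl,
    ENNReal.toReal_ofReal (expPDFReal_nonneg hr x)]
  ring

lemma integral_id_expMeasure {r : ℝ} (hr : 0 < r) :
    ∫ x, x ∂(expMeasure r) = r⁻¹ := by
  rw [expMeasure_eq]
  rw [integral_withDensity_eq_integral_smul
    ((measurable_exponentialPDFReal r).real_toNNReal)]
  rw [← integral_pdf_mul hr]
  refine integral_congr_ae (Filter.Eventually.of_forall (fun x => ?_))
  show (exponentialPDFReal r x).toNNReal • x = exponentialPDFReal r x * x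
  rw [NNReal.smul_def, Real.coe_toNNReal _ (expPDFReal_nonneg hr x), smul_eq_mul]

lemma expMeasure_Ioi {r : ℝ} (hr : 0 < r) {x : ℝ} (hx : 0 ≤ x) :
    expMeasure r (Set.Ioi x) = ENNReal.ofReal (Real.exp (-(r * x))) := by
  have : IsProbabilityMeasure (expMeasure r) := isProbabilityMeasure_expMeasure hr
  have hIic : expMeasure r (Set.Iic x) = ENNReal.ofReal (1 - Real.exp (-(r * x))) := by
    rw [expMeasure, gammaMeasure, withDensity_apply _ measurableSet_Iic]
    rw [show gammaPDF 1 r = exponentialPDF r from rfl]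
    rw [lintegral_exponentialPDF_eq_antiDeriv hr x, if_pos hx]
  have he1 : Real.exp (-(r * x)) ≤ 1 := by
    rw [Real.exp_le_one_iff]
    have : 0 ≤ r * x := mul_nonneg hr.le hx
    linarith
  rw [show Set.Ioi x = (Set.Iic x)ᶜ by simp, measure_compl measurableSet_Iic (measure_ne_top _ _),
    hIic, measure_univ]
  rw [show (1:ℝ≥0∞) = ENNReal.ofReal 1 by simp, ← ENNReal.ofReal_sub _ (by linarith)]
  norm_num

lemma expMeasure_ae_nonneg {r : ℝ} (hr : 0 < r) :
    ∀ᵐ x ∂(expMeasure r), 0 ≤ x := by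
  rw [ae_iff]
  have : {x : ℝ | ¬ 0 ≤ x} = Set.Iio 0 := by ext x; simp
  rw [this, expMeasure, gammaMeasure, withDensity_apply _ measurableSet_Iio]
  exact lintegral_gammaPDF_of_nonpos le_rfl

end CPAux

open scoped Topology

namespace CPAux

lemma tendsto_atBot_of_div {s : ℕ → ℝ} {L : ℝ} (hL : L < 0)
    (h : Tendsto (fun n : ℕ => s n / n) atTop (𝓝 L)) : Tendsto s atTop atBot := by
  rw [tendsto_atBot]
  intro b
  have h1 : ∀ᶠ n : ℕ in atTop, s n / n ≤ L / 2 :=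
    h.eventually (eventually_le_nhds (by linarith))
  have h2 : ∀ᶠ n : ℕ in atTop, (b / (L / 2) : ℝ) ≤ n :=
    tendsto_natCast_atTop_atTop.eventually_ge_atTop _
  filter_upwards [h1, h2, eventually_ge_atTop 1] with n hn1 hn2 hn3
  have hn : (0:ℝ) < n := by exact_mod_cast hn3
  have hs : s n ≤ (L / 2) * n := by
    have := mul_le_mul_of_nonneg_right hn1 hn.le
    rwa [div_mul_cancel₀ _ hn.ne'] at this
  refine hs.trans ?_
  have := (div_le_iff_of_neg (by linarith : (L/2) < 0)).1 hn2
  linarith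

lemma tendsto_atTop_of_div {s : ℕ → ℝ} {L : ℝ} (hL : 0 < L)
    (h : Tendsto (fun n : ℕ => s n / n) atTop (𝓝 L)) : Tendsto s atTop atTop := by
  have := tendsto_atBot_of_div (s := fun n => -(s n)) (L := -L) (by linarith)
    (by simpa [neg_div] using h.neg)
  simpa [tendsto_neg_atBot_iff] using this

lemma exists_nat_bound {s : ℕ → ℝ} (h : Tendsto s atTop atBot) :
    ∃ M : ℕ, ∀ n, s n ≤ M := by
  obtain ⟨N, hN⟩ := eventually_atTop.1 (tendsto_atBot.1 h 0)
  set B : ℝ := ∑ i ∈ Finset.range (N + 1), |s i| with hB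
  refine ⟨Nat.ceil B, fun n => ?_⟩
  have hBnn : 0 ≤ B := Finset.sum_nonneg (fun i _ => abs_nonneg _)
  rcases le_or_gt N n with hn | hn
  · exact (hN n hn).trans (by positivity)
  · have h1 : s n ≤ B := by
      refine (le_abs_self _).trans ?_
      exact Finset.single_le_sum (fun i _ => abs_nonneg (s i))
        (Finset.mem_range.2 (by omega))
    exact h1.trans (Nat.le_ceil B)

end CPAux
namespace CPAux

lemma comap_coord_le {Ω : Type*} [MeasurableSpace Ω] (F : ℕ → Ω → ℝ) (i : ℕ) :
    MeasurableSpace.comap (F (i+1)) inferInstance ≤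
      MeasurableSpace.comap (fun ω (k : ℕ) => F k ω) MeasurableSpace.pi := by
  have h := MeasurableSpace.comap_comp (m := (inferInstance : MeasurableSpace ℝ))
    (f := fun p : ℕ → ℝ => p (i+1)) (g := fun ω (k : ℕ) => F k ω)
  calc MeasurableSpace.comap (F (i+1)) inferInstance
      = MeasurableSpace.comap ((fun p : ℕ → ℝ => p (i+1)) ∘ (fun ω (k : ℕ) => F k ω))
          inferInstance := rfl
    _ = MeasurableSpace.comap (fun ω (k : ℕ) => F k ω)
          (MeasurableSpace.comap (fun p : ℕ → ℝ => p (i+1)) inferInstance) := h.symm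
    _ ≤ MeasurableSpace.comap (fun ω (k : ℕ) => F k ω) MeasurableSpace.pi :=
        MeasurableSpace.comap_mono (measurable_iff_comap_le.1 (measurable_pi_apply (i+1)))

lemma iIndep_pair_sigma {Ω : Type*} [MeasureSpace Ω] [IsProbabilityMeasure (ℙ : Measure Ω)]
    (E C : ℕ → Ω → ℝ) (hEmeas : ∀ i, Measurable (E i)) (hCmeas : ∀ i, Measurable (C i))
    (hEindep : iIndepFun (fun i : ℕ => E (i+1)) ℙ)
    (hCindep : iIndepFun (fun i : ℕ => C (i+1)) ℙ)
    (hEC : IndepFun (fun ω (i : ℕ) => E i ω) (fun ω (i : ℕ) => C i ω) ℙ) :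
    iIndep (fun i : ℕ => (MeasurableSpace.comap (E (i+1)) inferInstance) ⊔
      (MeasurableSpace.comap (C (i+1)) inferInstance)) ℙ := by
  classical
  set mE : ℕ → MeasurableSpace Ω := fun i => MeasurableSpace.comap (E (i+1)) inferInstance
    with hmE
  set mC : ℕ → MeasurableSpace Ω := fun i => MeasurableSpace.comap (C (i+1)) inferInstance
    with hmC
  have hECind : Indep (MeasurableSpace.comap (fun ω (k : ℕ) => E k ω) MeasurableSpace.pi)
      (MeasurableSpace.comap (fun ω (k : ℕ) => C k ω) MeasurableSpace.pi) ℙ := hEC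
  set ps : ℕ → Set (Set Ω) := fun i =>
    {s | ∃ a b : Set Ω, MeasurableSet[mE i] a ∧ MeasurableSet[mC i] b ∧ s = a ∩ b} with hps
  have h_pi : ∀ i, IsPiSystem (ps i) := by
    rintro i s ⟨a1, b1, ha1, hb1, rfl⟩ t ⟨a2, b2, ha2, hb2, rfl⟩ -
    exact ⟨a1 ∩ a2, b1 ∩ b2, ha1.inter ha2, hb1.inter hb2, by
      ext ω; simp only [Set.mem_inter_iff]; tauto⟩
  have h_le : ∀ i, mE i ⊔ mC i ≤ (inferInstance : MeasurableSpace Ω) := fun i =>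
    sup_le (measurable_iff_comap_le.1 (hEmeas (i+1))) (measurable_iff_comap_le.1 (hCmeas (i+1)))
  have h_generate : ∀ i, mE i ⊔ mC i = MeasurableSpace.generateFrom (ps i) := by
    intro i
    refine le_antisymm (sup_le ?_ ?_) (MeasurableSpace.generateFrom_le ?_)
    · intro s hs
      exact MeasurableSpace.measurableSet_generateFrom
        ⟨s, Set.univ, hs, MeasurableSet.univ, (Set.inter_univ s).symm⟩
    · intro s hs
      exact MeasurableSpace.measurableSet_generateFrom
        ⟨Set.univ, s, MeasurableSet.univ, hs, (Set.univ_inter s).symm⟩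
    · rintro s ⟨a, b, ha, hb, rfl⟩
      exact MeasurableSet.inter ((le_sup_left : mE i ≤ mE i ⊔ mC i) _ ha)
        ((le_sup_right : mC i ≤ mE i ⊔ mC i) _ hb)
  have h_ind : iIndepSets ps ℙ := by
    rw [iIndepSets_iff]
    intro s f hf
    have hf' : ∀ i, ∃ a b : Set Ω, MeasurableSet[mE i] a ∧ MeasurableSet[mC i] b ∧
        (i ∈ s → f i = a ∩ b) := by
      intro i
      by_cases hi : i ∈ s
      · obtain ⟨a, b, ha, hb, hab⟩ := hf i hi
        exact ⟨a, b, ha, hb, fun _ => hab⟩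
      · exact ⟨Set.univ, Set.univ, MeasurableSet.univ, MeasurableSet.univ, fun h => absurd h hi⟩
    choose a b ha hb hab using hf'
    have hIA : MeasurableSet[MeasurableSpace.comap (fun ω (k:ℕ) => E k ω) MeasurableSpace.pi]
        (⋂ i ∈ s, a i) :=
      MeasurableSet.biInter s.countable_toSet (fun i _ => comap_coord_le E i _ (ha i))
    have hIB : MeasurableSet[MeasurableSpace.comap (fun ω (k:ℕ) => C k ω) MeasurableSpace.pi]
        (⋂ i ∈ s, b i) :=
      MeasurableSet.biInter s.countable_toSet (fun i _ => comap_coord_le C i _ (hb i))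
    have hsplit : (⋂ i ∈ s, f i) = (⋂ i ∈ s, a i) ∩ (⋂ i ∈ s, b i) := by
      ext ω
      simp only [Set.mem_iInter, Set.mem_inter_iff]
      constructor
      · intro h
        refine ⟨fun i hi => ?_, fun i hi => ?_⟩
        · have := h i hi; rw [hab i hi] at this; exact this.1
        · have := h i hi; rw [hab i hi] at this; exact this.2
      · rintro ⟨h1, h2⟩ i hi
        rw [hab i hi]; exact ⟨h1 i hi, h2 i hi⟩
    have hprodE : ℙ (⋂ i ∈ s, a i) = ∏ i ∈ s, ℙ (a i) :=
      hEindep.meas_biInter (fun i _ => ha i)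
    have hprodC : ℙ (⋂ i ∈ s, b i) = ∏ i ∈ s, ℙ (b i) :=
      hCindep.meas_biInter (fun i _ => hb i)
    have hper : ∀ i ∈ s, ℙ (f i) = ℙ (a i) * ℙ (b i) := by
      intro i hi
      rw [hab i hi]
      exact (Indep_iff _ _ _).1 hECind _ _ (comap_coord_le E i _ (ha i))
        (comap_coord_le C i _ (hb i))
    rw [hsplit, (Indep_iff _ _ _).1 hECind _ _ hIA hIB, hprodE, hprodC,
      Finset.prod_congr rfl hper, Finset.prod_mul_distrib]
  exact iIndepSets.iIndep h_le ps h_pi h_generate h_ind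

lemma sum_Icc_one {M : Type*} [AddCommMonoid M] (f : ℕ → M) (n : ℕ) :
    ∑ i ∈ Finset.Icc 1 n, f i = ∑ i ∈ Finset.range n, f (i+1) := by
  induction n with
  | zero => simp
  | succ n ih =>
    rw [Finset.sum_Icc_succ_top (by omega : 1 ≤ n + 1), ih, Finset.sum_range_succ]

end CPAux

/-- Compound Poisson score process stays below its average rate forever with positive
probability: with i.i.d. exponential(`λ`) interarrival times `E i`, i.i.d. nonnegative
integrable scores `C i` of mean `m > 0` independent of the interarrival times, arrival
times `A n = ∑_{i=1}^n E i` and score process `S t = ∑_{n : A n ≤ t} C n`, for every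
`ε > 0` the event that `S t ≤ (λ m + ε) t` for all `t > 0` has probability `> 0`. -/
theorem compound_poisson_stays_below_rate
    {Ω : Type*} [MeasureSpace Ω] [IsProbabilityMeasure (ℙ : Measure Ω)]
    (lam : ℝ) (hlam : 0 < lam)
    (E : ℕ → Ω → ℝ) (hEmeas : ∀ i, Measurable (E i))
    (hEindep : iIndepFun (fun (i : ℕ) => E (i + 1)) ℙ)
    (hEdist : ∀ i : ℕ, Measure.map (E (i + 1)) ℙ = expMeasure lam)
    (C : ℕ → Ω → ℝ) (hCmeas : ∀ i, Measurable (C i))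
    (hCindep : iIndepFun (fun (i : ℕ) => C (i + 1)) ℙ)
    (hCident : ∀ i : ℕ, IdentDistrib (C (i + 1)) (C 1) ℙ ℙ)
    (hCnn : ∀ i, ∀ᵐ ω ∂ℙ, 0 ≤ C i ω)
    (hCint : Integrable (C 1) ℙ)
    (m : ℝ) (hm : m = ∫ ω, C 1 ω ∂ℙ) (hmpos : 0 < m)
    (hEC : IndepFun (fun ω (i : ℕ) => E i ω) (fun ω (i : ℕ) => C i ω) ℙ)
    (ε : ℝ) (hε : 0 < ε) :
    0 < ℙ {ω | ∀ t : ℝ, 0 < t →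
      (∑' n : ℕ, if 1 ≤ n ∧ (∑ i ∈ Finset.Icc 1 n, E i ω) ≤ t
        then ENNReal.ofReal (C n ω) else 0)
      ≤ ENNReal.ofReal ((lam * m + ε) * t)} := by
  classical
  set c : ℝ := lam * m + ε with hc
  have hcpos : 0 < c := by have := mul_pos hlam hmpos; rw [hc]; linarith
  -- σ-algebras generated by the pairs
  set mm : ℕ → MeasurableSpace Ω := fun i =>
    (MeasurableSpace.comap (E (i+1)) inferInstance) ⊔
      (MeasurableSpace.comap (C (i+1)) inferInstance) with hmm
  have HIND : iIndep mm ℙ := CPAux.iIndep_pair_sigma E C hEmeas hCmeas hEindep hCindep hEC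
  have h_le : ∀ i, mm i ≤ (inferInstance : MeasurableSpace Ω) := fun i =>
    sup_le (measurable_iff_comap_le.1 (hEmeas (i+1))) (measurable_iff_comap_le.1 (hCmeas (i+1)))
  -- the step variables
  set X : ℕ → Ω → ℝ := fun i ω => C (i+1) ω - c * E (i+1) ω with hX
  have hXmm : ∀ i, Measurable[mm i] (X i) := by
    intro i
    have h1 : Measurable[mm i] (E (i+1)) := measurable_iff_comap_le.2 le_sup_left
    have h2 : Measurable[mm i] (C (i+1)) := measurable_iff_comap_le.2 le_sup_right
    exact h2.sub (h1.const_mul c)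
  have hXcomap : ∀ i, MeasurableSpace.comap (X i) inferInstance ≤ mm i :=
    fun i => measurable_iff_comap_le.1 (hXmm i)
  have hXindep : Pairwise (Function.onFun (IndepFun · · ℙ) X) := by
    intro i j hij
    have h := HIND.indep hij
    exact indep_of_indep_of_le_left (indep_of_indep_of_le_right h (hXcomap j)) (hXcomap i)
  -- per-index independence of E and C
  have hECi : ∀ i : ℕ, IndepFun (E (i+1)) (C (i+1)) ℙ := by
    intro i
    exact indep_of_indep_of_le_left
      (indep_of_indep_of_le_right hEC (CPAux.comap_coord_le C i)) (CPAux.comap_coord_le E i)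
  -- identical distribution of the X i
  have hmapPair : ∀ i : ℕ, Measure.map (fun ω => (E (i+1) ω, C (i+1) ω)) ℙ
      = (expMeasure lam).prod (Measure.map (C 1) ℙ) := by
    intro i
    rw [(indepFun_iff_map_prod_eq_prod_map_map (hEmeas (i+1)).aemeasurable
      (hCmeas (i+1)).aemeasurable).1 (hECi i), hEdist i, (hCident i).map_eq]
  have hXident : ∀ i : ℕ, IdentDistrib (X i) (X 0) ℙ ℙ := by
    intro i
    have hphi : Measurable (fun p : ℝ × ℝ => p.2 - c * p.1) :=
      measurable_snd.sub (measurable_fst.const_mul c)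
    have hpair : IdentDistrib (fun ω => (E (i+1) ω, C (i+1) ω))
        (fun ω => (E (0+1) ω, C (0+1) ω)) ℙ ℙ :=
      ⟨((hEmeas (i+1)).prodMk (hCmeas (i+1))).aemeasurable,
       ((hEmeas (0+1)).prodMk (hCmeas (0+1))).aemeasurable,
       by rw [hmapPair i, hmapPair 0]⟩
    exact hpair.comp hphi
  -- integrability and mean
  have hEint : ∀ i : ℕ, Integrable (E (i+1)) ℙ := by
    intro i
    have h : Integrable id (Measure.map (E (i+1)) ℙ) := by
      rw [hEdist i]; exact CPAux.integrable_id_expMeasure hlam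
    have := (integrable_map_measure aestronglyMeasurable_id (hEmeas (i+1)).aemeasurable).1 h
    simpa [Function.comp] using this
  have hEmean : ∫ ω, E 1 ω ∂ℙ = lam⁻¹ := by
    have h1 : ∫ ω, E 1 ω ∂ℙ = ∫ x, x ∂(Measure.map (E 1) ℙ) := by
      exact (integral_map (hEmeas 1).aemeasurable aestronglyMeasurable_id).symm
    rw [h1, show Measure.map (E 1) ℙ = expMeasure lam from hEdist 0,
      CPAux.integral_id_expMeasure hlam]
  have hXint : Integrable (X 0) ℙ := hCint.sub ((hEint 0).const_mul c)
  have hXmean : ∫ ω, X 0 ω ∂ℙ = -(ε / lam) := by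
    have h1 : ∫ ω, X 0 ω ∂ℙ = (∫ ω, C 1 ω ∂ℙ) - ∫ ω, c * E 1 ω ∂ℙ :=
      integral_sub hCint ((hEint 0).const_mul c)
    rw [h1, integral_const_mul, hEmean, ← hm, hc]
    field_simp
    ring
  -- strong law for X
  have hSLLN : ∀ᵐ ω ∂ℙ, Tendsto (fun n : ℕ => (∑ i ∈ Finset.range n, X i ω) / n)
      atTop (𝓝 (-(ε/lam))) := by
    have h := strong_law_ae_real X hXint hXindep hXident
    rw [show ℙ[X 0] = -(ε/lam) from hXmean] at h
    exact h
  -- the shifted partial sums are a.s. bounded above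
  set V : ℕ → Ω → ℝ := fun n ω => ∑ i ∈ Finset.range n, X (i+1) ω with hV
  have hVbdd : ∀ᵐ ω ∂ℙ, ∃ M : ℕ, ∀ n, V n ω ≤ M := by
    filter_upwards [hSLLN] with ω hω
    have hU : Tendsto (fun n => ∑ i ∈ Finset.range n, X i ω) atTop atBot :=
      CPAux.tendsto_atBot_of_div (by { have := div_pos hε hlam; linarith }) hω
    have hV' : Tendsto (fun n => V n ω) atTop atBot := by
      have heq : ∀ n, V n ω = (∑ i ∈ Finset.range (n+1), X i ω) + (- X 0 ω) := by
        intro n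
        rw [Finset.sum_range_succ']
        ring
      rw [tendsto_congr heq]
      exact tendsto_atBot_add_const_right _ _ (hU.comp (tendsto_add_atTop_nat 1))
    exact CPAux.exists_nat_bound hV'
  -- choose M with positive probability
  set G : ℕ → Set Ω := fun M => {ω | ∀ n, V n ω ≤ M} with hG
  have hGpos : ∃ M : ℕ, 0 < ℙ (G M) := by
    by_contra hcon
    push_neg at hcon
    have hzero : ∀ M, ℙ (G M) = 0 := fun M => le_antisymm (hcon M) (zero_le)
    have h1 : ℙ (⋃ M : ℕ, G M) = 0 :=
      le_antisymm ((measure_iUnion_le _).trans (by simp [hzero])) (zero_le)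
    have h2 : ℙ ((⋃ M : ℕ, G M)ᶜ) = 0 := by
      have hae : ∀ᵐ ω ∂ℙ, ω ∈ ⋃ M : ℕ, G M := by
        filter_upwards [hVbdd] with ω hω
        obtain ⟨M, hM⟩ := hω
        exact Set.mem_iUnion.2 ⟨M, hM⟩
      rw [show (⋃ M : ℕ, G M)ᶜ = {ω | ¬ ω ∈ ⋃ M : ℕ, G M} from rfl]
      exact ae_iff.1 hae
    have hcontr : (1:ℝ≥0∞) ≤ 0 := by
      calc (1:ℝ≥0∞) = ℙ (Set.univ) := measure_univ.symm
        _ = ℙ ((⋃ M : ℕ, G M) ∪ (⋃ M : ℕ, G M)ᶜ) := by rw [Set.union_compl_self]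
        _ ≤ ℙ (⋃ M : ℕ, G M) + ℙ ((⋃ M : ℕ, G M)ᶜ) := measure_union_le _ _
        _ = 0 := by rw [h1, h2, add_zero]
    simp at hcontr
  obtain ⟨M, hMpos⟩ := hGpos
  -- choose K with positive probability for C 1 being bounded
  have hKex : ∃ K : ℕ, 0 < ℙ (C 1 ⁻¹' Set.Iic (K:ℝ)) := by
    by_contra hcon
    push_neg at hcon
    have hzero : ∀ K : ℕ, ℙ (C 1 ⁻¹' Set.Iic (K:ℝ)) = 0 :=
      fun K => le_antisymm (hcon K) (zero_le)
    have huniv : (Set.univ : Set Ω) = ⋃ K : ℕ, C 1 ⁻¹' Set.Iic (K:ℝ) := by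
      ext ω
      simp only [Set.mem_univ, true_iff, Set.mem_iUnion, Set.mem_preimage, Set.mem_Iic]
      exact ⟨Nat.ceil (C 1 ω), Nat.le_ceil _⟩
    have hcontr : (1:ℝ≥0∞) ≤ 0 := by
      calc (1:ℝ≥0∞) = ℙ (Set.univ) := measure_univ.symm
        _ ≤ ∑' K : ℕ, ℙ (C 1 ⁻¹' Set.Iic (K:ℝ)) := by
            rw [huniv]; exact measure_iUnion_le _
        _ = 0 := by simp [hzero]
    simp at hcontr
  obtain ⟨K, hKpos⟩ := hKex
  -- the initial event D
  set R : ℝ := ((M:ℝ) + K) / c with hR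
  have hRnn : 0 ≤ R := by positivity
  set D : Set Ω := {ω | X 0 ω ≤ -(M:ℝ)} with hD
  have hDpos : 0 < ℙ D := by
    have hsub : E 1 ⁻¹' Set.Ici R ∩ C 1 ⁻¹' Set.Iic (K:ℝ) ⊆ D := by
      rintro ω ⟨h2, h1⟩
      simp only [Set.mem_preimage, Set.mem_Ici, Set.mem_Iic] at h1 h2
      show C (0+1) ω - c * E (0+1) ω ≤ -(M:ℝ)
      have hmul : c * R ≤ c * E 1 ω := mul_le_mul_of_nonneg_left h2 hcpos.le
      have hcR : c * R = (M:ℝ) + K := by rw [hR]; field_simp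
      simp only [Nat.zero_add]
      linarith
    have hEtail : 0 < ℙ (E 1 ⁻¹' Set.Ici R) := by
      have hmap : ℙ (E 1 ⁻¹' Set.Ioi R) = ENNReal.ofReal (Real.exp (-(lam * R))) := by
        rw [← Measure.map_apply (hEmeas 1) measurableSet_Ioi,
          show Measure.map (E 1) ℙ = expMeasure lam from hEdist 0, CPAux.expMeasure_Ioi hlam hRnn]
      have h1 : 0 < ℙ (E 1 ⁻¹' Set.Ioi R) := by
        rw [hmap]
        exact ENNReal.ofReal_pos.2 (Real.exp_pos _)
      exact lt_of_lt_of_le h1 (measure_mono (Set.preimage_mono Set.Ioi_subset_Ici_self))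
    have hprod := (hECi 0).measure_inter_preimage_eq_mul (Set.Ici R) (Set.Iic (K:ℝ))
      measurableSet_Ici measurableSet_Iic
    refine lt_of_lt_of_le ?_ (measure_mono hsub)
    rw [show E (0+1) = E 1 from rfl, show C (0+1) = C 1 from rfl] at hprod
    rw [hprod]
    exact ENNReal.mul_pos hEtail.ne' hKpos.ne'
  -- independence of D and G M
  have hDGprod : ℙ (D ∩ G M) = ℙ D * ℙ (G M) := by
    have hdisj : Disjoint ({0} : Set ℕ) {i : ℕ | i ≠ 0} := by
      simp [Set.disjoint_left]
    have hIndep := indep_iSup_of_disjoint h_le HIND hdisj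
    refine (Indep_iff _ _ _).1 hIndep _ _ ?_ ?_
    · have hle0 : mm 0 ≤ ⨆ i ∈ ({0} : Set ℕ), mm i := le_biSup mm rfl
      exact hle0 _ (hXmm 0 measurableSet_Iic)
    · have hmeasV : ∀ n, Measurable[⨆ i ∈ {i : ℕ | i ≠ 0}, mm i] (V n) := by
        intro n
        refine Finset.measurable_sum _ (fun i _ => ?_)
        have hle : mm (i+1) ≤ ⨆ j ∈ {i : ℕ | i ≠ 0}, mm j :=
          le_biSup mm (by simp)
        exact measurable_iff_comap_le.2 (le_trans (hXcomap (i+1)) hle)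
      have hGeq : G M = ⋂ n, V n ⁻¹' Set.Iic (M:ℝ) := by
        ext ω; simp [hG, Set.mem_iInter]
      rw [hGeq]
      exact MeasurableSet.iInter (fun n => hmeasV n measurableSet_Iic)
  have hDGpos : 0 < ℙ (D ∩ G M) := by
    rw [hDGprod]; exact ENNReal.mul_pos hDpos.ne' hMpos.ne'
  -- almost sure facts
  have hCnn' : ∀ᵐ ω ∂ℙ, ∀ i : ℕ, 0 ≤ C (i+1) ω := ae_all_iff.2 (fun i => hCnn (i+1))
  have hEnn : ∀ᵐ ω ∂ℙ, ∀ i : ℕ, 0 ≤ E (i+1) ω := by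
    rw [ae_all_iff]
    intro i
    have h := CPAux.expMeasure_ae_nonneg hlam
    rw [← hEdist i] at h
    exact (ae_map_iff (hEmeas (i+1)).aemeasurable measurableSet_Ici).1 h
  have hASLLN : ∀ᵐ ω ∂ℙ, Tendsto (fun n : ℕ => ∑ i ∈ Finset.Icc 1 n, E i ω) atTop atTop := by
    have hident : ∀ i : ℕ, IdentDistrib (E (i+1)) (E (0+1)) ℙ ℙ := fun i =>
      ⟨(hEmeas _).aemeasurable, (hEmeas _).aemeasurable, by rw [hEdist i, hEdist 0]⟩
    have h := strong_law_ae_real (fun i => E (i+1)) (hEint 0)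
      (fun i j hij => hEindep.indepFun hij) hident
    filter_upwards [h] with ω hω
    have hmean : ℙ[fun ω => E (0+1) ω] = lam⁻¹ := hEmean
    rw [hmean] at hω
    have htop : Tendsto (fun n : ℕ => ∑ i ∈ Finset.range n, E (i+1) ω) atTop atTop :=
      CPAux.tendsto_atTop_of_div (inv_pos.2 hlam) hω
    refine Tendsto.congr (fun n => ?_) htop
    exact (CPAux.sum_Icc_one (fun i => E i ω) n).symm
  -- the full-measure auxiliary set
  set Fga : Set Ω := {ω | (∀ i : ℕ, 0 ≤ C (i+1) ω) ∧ (∀ i : ℕ, 0 ≤ E (i+1) ω) ∧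
      Tendsto (fun n : ℕ => ∑ i ∈ Finset.Icc 1 n, E i ω) atTop atTop} with hFga
  have hFae : ∀ᵐ ω ∂ℙ, ω ∈ Fga := by
    filter_upwards [hCnn', hEnn, hASLLN] with ω h1 h2 h3
    exact ⟨h1, h2, h3⟩
  have hFc : ℙ Fgaᶜ = 0 := ae_iff.1 hFae
  have hBpos : 0 < ℙ (D ∩ G M ∩ Fga) := by
    have hsub : D ∩ G M ⊆ (D ∩ G M ∩ Fga) ∪ Fgaᶜ := by
      intro ω hω
      by_cases h : ω ∈ Fga
      · exact Or.inl ⟨hω, h⟩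
      · exact Or.inr h
    have hle : ℙ (D ∩ G M) ≤ ℙ (D ∩ G M ∩ Fga) := by
      calc ℙ (D ∩ G M) ≤ ℙ ((D ∩ G M ∩ Fga) ∪ Fgaᶜ) := measure_mono hsub
        _ ≤ ℙ (D ∩ G M ∩ Fga) + ℙ Fgaᶜ := measure_union_le _ _
        _ = ℙ (D ∩ G M ∩ Fga) := by rw [hFc, add_zero]
    exact lt_of_lt_of_le hDGpos hle
  -- the final inclusion
  refine lt_of_lt_of_le hBpos (measure_mono ?_)
  rintro ω ⟨⟨hωD, hωG⟩, hωC, hωE, hωA⟩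
  simp only [Set.mem_setOf_eq]
  intro t ht
  -- abbreviations
  set A : ℕ → ℝ := fun n => ∑ i ∈ Finset.Icc 1 n, E i ω with hA
  set SC : ℕ → ℝ := fun n => ∑ i ∈ Finset.Icc 1 n, C i ω with hSC
  have hωD' : X 0 ω ≤ -(M:ℝ) := hωD
  have hωG' : ∀ n, V n ω ≤ (M:ℝ) := hωG
  have hKey : ∀ n : ℕ, 1 ≤ n → SC n ≤ c * A n := by
    intro n hn
    obtain ⟨k, rfl⟩ : ∃ k, n = k + 1 := ⟨n - 1, by omega⟩
    have hU : ∑ i ∈ Finset.range (k+1), X i ω ≤ 0 := by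
      rw [Finset.sum_range_succ']
      have := hωG' k
      have := hωD'
      show V k ω + X 0 ω ≤ 0
      linarith [hωG' k, hωD']
    have hsplit : ∑ i ∈ Finset.range (k+1), X i ω = SC (k+1) - c * A (k+1) := by
      simp only [hX, hSC, hA]
      rw [Finset.sum_sub_distrib, ← Finset.mul_sum,
        CPAux.sum_Icc_one (fun i => C i ω) (k+1), CPAux.sum_Icc_one (fun i => E i ω) (k+1)]
    linarith [hsplit ▸ hU]
  have hAmono : Monotone A := by
    intro a b hab
    refine Finset.sum_le_sum_of_subset_of_nonneg (Finset.Icc_subset_Icc_right hab) ?_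
    intro i hi _
    have h1i := (Finset.mem_Icc.1 hi).1
    obtain ⟨j, rfl⟩ : ∃ j, i = j + 1 := ⟨i - 1, by omega⟩
    exact hωE j
  -- the tail of arrivals exceeds t
  obtain ⟨n₀, hn₀⟩ := eventually_atTop.1 (hωA.eventually_gt_atTop t)
  have hvanish : ∀ n ∉ Finset.range n₀, (if 1 ≤ n ∧ (∑ i ∈ Finset.Icc 1 n, E i ω) ≤ t
      then ENNReal.ofReal (C n ω) else 0) = 0 := by
    intro n hn
    rw [if_neg]
    rintro ⟨-, hle⟩
    have := hn₀ n (by simpa [Finset.mem_range, not_lt] using hn)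
    exact absurd hle (not_le.2 this)
  rw [tsum_eq_sum hvanish]
  -- locate the last arrival before t
  set n₁ : ℕ := Nat.findGreatest (fun n => 1 ≤ n ∧ A n ≤ t) n₀ with hn₁
  by_cases hex : ∃ iw, iw ≤ n₀ ∧ (1 ≤ iw ∧ A iw ≤ t)
  · obtain ⟨iw, hiw, hPiw⟩ := hex
    have hPn₁ : 1 ≤ n₁ ∧ A n₁ ≤ t :=
      Nat.findGreatest_spec (P := fun n => 1 ≤ n ∧ A n ≤ t) hiw hPiw
    calc ∑ n ∈ Finset.range n₀, (if 1 ≤ n ∧ A n ≤ t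
          then ENNReal.ofReal (C n ω) else 0)
        ≤ ∑ n ∈ Finset.Icc 1 n₁, (if 1 ≤ n ∧ A n ≤ t
            then ENNReal.ofReal (C n ω) else 0) := by
          refine Finset.sum_le_sum_of_ne_zero (fun x hx hne => ?_)
          by_cases hcond : 1 ≤ x ∧ A x ≤ t
          · exact Finset.mem_Icc.2 ⟨hcond.1,
              Nat.le_findGreatest (le_of_lt (Finset.mem_range.1 hx)) hcond⟩
          · simp [hcond] at hne
      _ ≤ ∑ n ∈ Finset.Icc 1 n₁, ENNReal.ofReal (C n ω) := by
          refine Finset.sum_le_sum (fun i _ => ?_)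
          split_ifs
          · exact le_rfl
          · exact zero_le
      _ = ENNReal.ofReal (∑ n ∈ Finset.Icc 1 n₁, C n ω) := by
          rw [ENNReal.ofReal_sum_of_nonneg]
          intro i hi
          have h1i := (Finset.mem_Icc.1 hi).1
          obtain ⟨j, rfl⟩ : ∃ j, i = j + 1 := ⟨i - 1, by omega⟩
          exact hωC j
      _ ≤ ENNReal.ofReal (c * t) := by
          refine ENNReal.ofReal_le_ofReal ?_
          have h1 := hKey n₁ hPn₁.1
          have h2 : c * A n₁ ≤ c * t := mul_le_mul_of_nonneg_left hPn₁.2 hcpos.le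
          linarith
  · have hempty : ∀ n ∈ Finset.range n₀, (if 1 ≤ n ∧ A n ≤ t
        then ENNReal.ofReal (C n ω) else 0) = 0 := by
      intro n hn
      rw [if_neg]
      rintro ⟨h1n, h2n⟩
      exact hex ⟨n, le_of_lt (Finset.mem_range.1 hn), h1n, h2n⟩
    rw [Finset.sum_eq_zero hempty]
    exact zero_le
end
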